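/- Fix real constants p, q, r, s. At every point P = (T,X,Y,Z) with ζ(T,Z) ≠ 0 and ξ(T,Z) ≠ 0, the forward map Φ is differentiable, and its Jacobian matrix J = DΦ(P) (with coordinates ordered (t,x,y,z) and (T,X,Y,Z)) satisfies Jᵀ G(Φ(P)) J = diag(1,−1,−1,−1), where G(t,x,y,z) = diag(1, −f(t,z)², −g(t,z)², −1). That is, Φ pulls the metric ds² = dt² − f²dx² − g²dy² − dz² back to the Minkowski metric ds² = dT² − dX² − dY² − dZ². -/

import Mathlib

open Matrix

noncomputable section

/-- ζ(T,Z) = p + q(T−Z)/√2. -/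
def zeta (p q T Z : ℝ) : ℝ := p + q * ((T - Z) / Real.sqrt 2)

/-- ξ(T,Z) = r + s(T−Z)/√2. -/
def xi (r s T Z : ℝ) : ℝ := r + s * ((T - Z) / Real.sqrt 2)

/-- The forward map Φ from Fermi coordinates v = (T,X,Y,Z) (indices 0,1,2,3)
to wave coordinates (t,x,y,z) (indices 0,1,2,3), Eqs. (FT2)-(FT5). -/
def fwd (p q r s : ℝ) (v : Fin 4 → ℝ) : Fin 4 → ℝ :=
  ![v 0 - q * (v 1) ^ 2 / (2 * Real.sqrt 2 * zeta p q (v 0) (v 3))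
        - s * (v 2) ^ 2 / (2 * Real.sqrt 2 * xi r s (v 0) (v 3)),
    v 1 / zeta p q (v 0) (v 3),
    v 2 / xi r s (v 0) (v 3),
    v 3 - q * (v 1) ^ 2 / (2 * Real.sqrt 2 * zeta p q (v 0) (v 3))
        - s * (v 2) ^ 2 / (2 * Real.sqrt 2 * xi r s (v 0) (v 3))]

/-- The matrix G(t,x,y,z) = diag(1, −f(t,z)², −g(t,z)², −1) of the metric
ds² = dt² − f²dx² − g²dy² − dz², where f(t,z) = p + q(t−z)/√2 and
g(t,z) = r + s(t−z)/√2, in coordinates w = (t,x,y,z). -/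
def Gmet (p q r s : ℝ) (w : Fin 4 → ℝ) : Matrix (Fin 4) (Fin 4) ℝ :=
  Matrix.diagonal ![1, -(p + q * ((w 0 - w 3) / Real.sqrt 2)) ^ 2,
    -(r + s * ((w 0 - w 3) / Real.sqrt 2)) ^ 2, -1]

lemma fermi_diff (p q r s : ℝ) (P : Fin 4 → ℝ)
    (hz : zeta p q (P 0) (P 3) ≠ 0) (hx : xi r s (P 0) (P 3) ≠ 0) :
    DifferentiableAt ℝ (fwd p q r s) P := by
  have hs2 : Real.sqrt 2 ≠ 0 := by positivity
  have hzd : DifferentiableAt ℝ (fun v : Fin 4 → ℝ => zeta p q (v 0) (v 3)) P := by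
    simp only [zeta]; fun_prop
  have hxd : DifferentiableAt ℝ (fun v : Fin 4 → ℝ => xi r s (v 0) (v 3)) P := by
    simp only [xi]; fun_prop
  have hden1 : 2 * Real.sqrt 2 * zeta p q (P 0) (P 3) ≠ 0 :=
    mul_ne_zero (by positivity) hz
  have hden2 : 2 * Real.sqrt 2 * xi r s (P 0) (P 3) ≠ 0 :=
    mul_ne_zero (by positivity) hx
  have hA : DifferentiableAt ℝ
      (fun v : Fin 4 → ℝ => q * (v 1) ^ 2 / (2 * Real.sqrt 2 * zeta p q (v 0) (v 3))) P :=
    by simp only [div_eq_mul_inv]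
       exact DifferentiableAt.mul (by fun_prop) ((hzd.const_mul _).inv hden1)
  have hB : DifferentiableAt ℝ
      (fun v : Fin 4 → ℝ => s * (v 2) ^ 2 / (2 * Real.sqrt 2 * xi r s (v 0) (v 3))) P :=
    by simp only [div_eq_mul_inv]
       exact DifferentiableAt.mul (by fun_prop) ((hxd.const_mul _).inv hden2)
  have h0 : DifferentiableAt ℝ (fun v : Fin 4 → ℝ => v 0) P := by fun_prop
  have h1 : DifferentiableAt ℝ (fun v : Fin 4 → ℝ => v 1) P := by fun_prop
  have h2 : DifferentiableAt ℝ (fun v : Fin 4 → ℝ => v 2) P := by fun_prop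
  have h3 : DifferentiableAt ℝ (fun v : Fin 4 → ℝ => v 3) P := by fun_prop
  rw [differentiableAt_pi]
  intro i
  fin_cases i <;> simp only [fwd, Matrix.cons_val_zero, Matrix.cons_val_one, Matrix.head_cons,
    Matrix.cons_val_two, Matrix.tail_cons, Matrix.cons_val_three, Fin.isValue]
  · exact (h0.sub hA).sub hB
  · simp only [div_eq_mul_inv]; exact h1.mul (hzd.inv hz)
  · simp only [div_eq_mul_inv]; exact h2.mul (hxd.inv hx)
  · exact (h3.sub hA).sub hB

set_option maxHeartbeats 1000000 in
lemma fermi_key (p q r s : ℝ) (P : Fin 4 → ℝ)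
    (hz : zeta p q (P 0) (P 3) ≠ 0) (hx : xi r s (P 0) (P 3) ≠ 0)
    (h : Fin 4 → ℝ) (i : Fin 4) :
    fderiv ℝ (fwd p q r s) P h i =
      ![h 0 - (q / Real.sqrt 2 * P 1 * h 1 / zeta p q (P 0) (P 3)
            - (q / Real.sqrt 2) ^ 2 * P 1 ^ 2 * (h 0 - h 3) / (2 * zeta p q (P 0) (P 3) ^ 2))
          - (s / Real.sqrt 2 * P 2 * h 2 / xi r s (P 0) (P 3)
            - (s / Real.sqrt 2) ^ 2 * P 2 ^ 2 * (h 0 - h 3) / (2 * xi r s (P 0) (P 3) ^ 2)),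
        h 1 / zeta p q (P 0) (P 3)
          - q / Real.sqrt 2 * P 1 * (h 0 - h 3) / zeta p q (P 0) (P 3) ^ 2,
        h 2 / xi r s (P 0) (P 3)
          - s / Real.sqrt 2 * P 2 * (h 0 - h 3) / xi r s (P 0) (P 3) ^ 2,
        h 3 - (q / Real.sqrt 2 * P 1 * h 1 / zeta p q (P 0) (P 3)
            - (q / Real.sqrt 2) ^ 2 * P 1 ^ 2 * (h 0 - h 3) / (2 * zeta p q (P 0) (P 3) ^ 2))
          - (s / Real.sqrt 2 * P 2 * h 2 / xi r s (P 0) (P 3)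
            - (s / Real.sqrt 2) ^ 2 * P 2 ^ 2 * (h 0 - h 3) / (2 * xi r s (P 0) (P 3) ^ 2))] i := by
  have hs2 : Real.sqrt 2 ≠ 0 := by positivity
  have h2 : Real.sqrt 2 * Real.sqrt 2 = 2 := Real.mul_self_sqrt (by norm_num)
  have h2' : Real.sqrt 2 ^ 2 = 2 := Real.sq_sqrt (by norm_num)
  have e6 : Real.sqrt 2 ^ 6 = 8 := by rw [show Real.sqrt 2 ^ 6 = (Real.sqrt 2 ^ 2) ^ 3 by ring, h2']; norm_num
  have e8 : Real.sqrt 2 ^ 8 = 16 := by rw [show Real.sqrt 2 ^ 8 = (Real.sqrt 2 ^ 2) ^ 4 by ring, h2']; norm_num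
  have hline : HasDerivAt (fun t : ℝ => P + t • h) h 0 := by
    simpa using ((hasDerivAt_id (0 : ℝ)).smul_const h).const_add P
  have hcomp := (fermi_diff p q r s P hz hx).hasFDerivAt.comp_hasDerivAt_of_eq 0 hline (by simp)
  have hcompi := hasDerivAt_pi.1 hcomp i
  refine HasDerivAt.unique hcompi ?_
  have hv : ∀ k : Fin 4, HasDerivAt (fun t : ℝ => P k + t * h k) (h k) 0 := fun k => by
    simpa using ((hasDerivAt_id (0 : ℝ)).mul_const (h k)).const_add (P k)
  have hZt : HasDerivAt
      (fun t : ℝ => zeta p q (P 0 + t * h 0) (P 3 + t * h 3))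
      (q * ((h 0 - h 3) / Real.sqrt 2)) 0 := by
    simp only [zeta]
    have := ((((hv 0).sub (hv 3)).div_const (Real.sqrt 2)).const_mul q).const_add p
    simpa using this
  have hXt : HasDerivAt
      (fun t : ℝ => xi r s (P 0 + t * h 0) (P 3 + t * h 3))
      (s * ((h 0 - h 3) / Real.sqrt 2)) 0 := by
    simp only [xi]
    have := ((((hv 0).sub (hv 3)).div_const (Real.sqrt 2)).const_mul s).const_add r
    simpa using this
  have hden1 : 2 * Real.sqrt 2 * zeta p q (P 0) (P 3) ≠ 0 := mul_ne_zero (by positivity) hz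
  have hden2 : 2 * Real.sqrt 2 * xi r s (P 0) (P 3) ≠ 0 := mul_ne_zero (by positivity) hx
  have hAt := (((hv 1).pow 2).const_mul q).div (hZt.const_mul (2 * Real.sqrt 2))
    (by simpa using hden1)
  have hBt := (((hv 2).pow 2).const_mul s).div (hXt.const_mul (2 * Real.sqrt 2))
    (by simpa using hden2)
  fin_cases i <;>
    simp only [Function.comp, fwd, Pi.add_apply, Pi.smul_apply, smul_eq_mul,
      Matrix.cons_val_zero, Matrix.cons_val_one, Matrix.head_cons, Matrix.cons_val_two,
      Matrix.tail_cons, Matrix.cons_val_three, Fin.isValue, Matrix.cons_val', Matrix.empty_val',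
      Matrix.cons_val_fin_one, Fin.reduceFinMk]
  · convert ((hv 0).sub hAt).sub hBt using 1
    case e'_8 => rfl
    norm_num
    field_simp
  · convert (hv 1).div hZt (by simpa using hz) using 1
    case e'_4 => rfl
    case e'_8 => rfl
    norm_num
    field_simp
  · convert (hv 2).div hXt (by simpa using hx) using 1
    case e'_4 => rfl
    case e'_8 => rfl
    norm_num
    field_simp
  · convert ((hv 3).sub hAt).sub hBt using 1
    case e'_8 => rfl
    norm_num
    field_simp

set_option maxHeartbeats 1000000 in
/-- At every point where ζ ≠ 0 and ξ ≠ 0, the map Φ is differentiable and its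
Jacobian J satisfies Jᵀ G(Φ(P)) J = diag(1,−1,−1,−1): Φ pulls the wave metric
back to the Minkowski metric. -/
theorem fermi_map_pullback_minkowski (p q r s : ℝ) (P : Fin 4 → ℝ)
    (hz : zeta p q (P 0) (P 3) ≠ 0) (hx : xi r s (P 0) (P 3) ≠ 0) :
    DifferentiableAt ℝ (fwd p q r s) P ∧
    (let J : Matrix (Fin 4) (Fin 4) ℝ :=
      Matrix.of fun i j => fderiv ℝ (fwd p q r s) P (Pi.single j 1) i
    Jᵀ * Gmet p q r s (fwd p q r s P) * J = Matrix.diagonal ![1, -1, -1, -1]) := by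
  refine ⟨fermi_diff p q r s P hz hx, ?_⟩
  have h2' : Real.sqrt 2 ^ 2 = 2 := Real.sq_sqrt (by norm_num)
  have e4 : Real.sqrt 2 ^ 4 = 4 := by
    rw [show Real.sqrt 2 ^ 4 = (Real.sqrt 2 ^ 2) ^ 2 by ring, h2']; norm_num
  dsimp only
  have hfwd03 : fwd p q r s P 0 - fwd p q r s P 3 = P 0 - P 3 := by
    simp only [fwd, Matrix.cons_val_zero, Matrix.cons_val_three, Matrix.cons_val_one,
      Matrix.head_cons, Matrix.tail_cons]
    ring
  have hG : Gmet p q r s (fwd p q r s P) =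
      Matrix.diagonal ![1, -(zeta p q (P 0) (P 3)) ^ 2, -(xi r s (P 0) (P 3)) ^ 2, -1] := by
    rw [Gmet, hfwd03]; rfl
  rw [hG]
  ext i j
  fin_cases i <;> fin_cases j <;>
  · simp only [fermi_key p q r s P hz hx]
    simp [Matrix.mul_apply, Matrix.transpose_apply, Matrix.of_apply, Fin.sum_univ_four,
      Matrix.diagonal_apply, Pi.single_apply]
    all_goals field_simp
    all_goals ring_nf
    all_goals simp only [h2', e4]
    all_goals ring
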